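/- (Lemma 4, additional pruning for parametric DP.) Let P_prune = { τ ∈ T̂_{k,n-1} : L_{k,n-1}(z, τ) > L^opt_{k-1,n-1}(z) for all z ∈ R }, and define T̄_{k,n} = (T̂_{k,n-1} \ P_prune) ∪ concat(T^opt_{k-1,n-1}, n-1). Then T^opt_{k,n} ⊆ T̄_{k,n} ⊆ T̂_{k,n}, where T̂_{k,n} = ∪_{m=k}^{n-1} concat(T^opt_{k-1,m}, m). -/

import Mathlib

/-- Segment mean of entries `s` through `e` of the sequence `x`. -/
noncomputable def segMean (x : ℕ → ℝ) (s e : ℕ) : ℝ :=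
  (∑ i ∈ Finset.Icc s e, x i) / ((e - s + 1 : ℕ) : ℝ)

/-- Segment cost `C(x_{s:e}) = ∑_{i=s}^e (x_i - x̄_{s:e})²`. -/
noncomputable def segCost (x : ℕ → ℝ) (s e : ℕ) : ℝ :=
  ∑ i ∈ Finset.Icc s e, (x i - segMean x s e) ^ 2

/-- The parametrized sequence `x(z) = a + b z`. -/
def paramSeq (a b : ℕ → ℝ) (z : ℝ) : ℕ → ℝ := fun i => a i + b i * z

/-- The segment boundaries `0 = τ₀ < τ₁ < ... < τ_k < τ_{k+1} = n` associated with a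
changepoint vector `τ = (τ₁, ..., τ_k)`. -/
def bounds (n : ℕ) {k : ℕ} (τ : Fin k → ℕ) : Fin (k + 2) → ℕ :=
  Fin.snoc (Fin.cons 0 τ) n

/-- `τ` is a valid `k`-dimensional changepoint vector for a length-`n` sequence:
strictly increasing with `1 ≤ τ_i ≤ n - 1`. -/
def validCP (n : ℕ) {k : ℕ} (τ : Fin k → ℕ) : Prop :=
  StrictMono τ ∧ ∀ i, 1 ≤ τ i ∧ τ i < n

/-- The segmentation loss `L_{k,n}(x, τ) = ∑_{κ=1}^{k+1} C(x_{τ_{κ-1}+1 : τ_κ})`. -/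
noncomputable def cpLoss (x : ℕ → ℝ) (n : ℕ) {k : ℕ} (τ : Fin k → ℕ) : ℝ :=
  ∑ κ : Fin (k + 1), segCost x (bounds n τ κ.castSucc + 1) (bounds n τ κ.succ)

/-- The optimal loss `L^opt_{k,n}(x) = min_{τ ∈ T_{k,n}} L_{k,n}(x, τ)`. -/
noncomputable def optLoss (x : ℕ → ℝ) (k n : ℕ) : ℝ :=
  sInf {r : ℝ | ∃ τ : Fin k → ℕ, validCP n τ ∧ r = cpLoss x n τ}

/-- `T^opt_{k,n}`: the set of `k`-dimensional changepoint vectors that are optimal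
for the sequence `x(z) = a + b z` at some `z ∈ ℝ`. -/
def Topt (a b : ℕ → ℝ) (k n : ℕ) : Set (Fin k → ℕ) :=
  {τ | validCP n τ ∧
    ∃ z : ℝ, optLoss (paramSeq a b z) k n = cpLoss (paramSeq a b z) n τ}

/-- `T̂_{k,n} = ∪_{m=k}^{n-1} concat(T^opt_{k-1,m}, m)` (with `k = j + 1`). -/
def Tcand (a b : ℕ → ℝ) (j n : ℕ) : Set (Fin (j + 1) → ℕ) :=
  ⋃ m ∈ Set.Icc (j + 1) (n - 1), (fun τ : Fin j → ℕ => Fin.snoc τ m) '' Topt a b j m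

/- ### Auxiliary lemmas -/

lemma segMean_sum (x : ℕ → ℝ) {s e : ℕ} (h : s ≤ e) :
    ∑ i ∈ Finset.Icc s e, x i = ((e - s + 1 : ℕ) : ℝ) * segMean x s e := by
  have hN : ((e - s + 1 : ℕ) : ℝ) ≠ 0 := by positivity
  rw [segMean, mul_comm, div_mul_cancel₀ _ hN]

/-- The mean minimizes the sum of squared deviations. -/
lemma sum_sq_mean_le (x : ℕ → ℝ) {s e : ℕ} (h : s ≤ e) (c : ℝ) :
    segCost x s e ≤ ∑ i ∈ Finset.Icc s e, (x i - c) ^ 2 := by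
  set μ := segMean x s e with hμ
  set N : ℝ := ((e - s + 1 : ℕ) : ℝ) with hNdef
  have hNpos : 0 < N := by positivity
  have hsum : ∑ i ∈ Finset.Icc s e, x i = N * μ := segMean_sum x h
  have hcard : ((Finset.Icc s e).card : ℝ) = N := by
    rw [Nat.card_Icc, hNdef]
    congr 1
    omega
  have key : ∑ i ∈ Finset.Icc s e, (x i - c) ^ 2
      = segCost x s e + (μ - c) *
        (2 * (∑ i ∈ Finset.Icc s e, x i) - ((Finset.Icc s e).card : ℝ) * (c + μ)) := by
    rw [segCost,
      Finset.sum_congr rfl (fun i _ =>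
        show (x i - c) ^ 2 = (x i - μ) ^ 2 + (μ - c) * (2 * x i - (c + μ)) from by ring),
      Finset.sum_add_distrib, ← Finset.mul_sum, Finset.sum_sub_distrib, Finset.sum_const,
      ← Finset.mul_sum, nsmul_eq_mul]
  rw [key, hsum, hcard]
  nlinarith [sq_nonneg (μ - c), hNpos]

lemma segCost_le_succ (x : ℕ → ℝ) {s e : ℕ} (h : s ≤ e) :
    segCost x s e ≤ segCost x s (e + 1) := by
  have h1 : segCost x s e ≤ ∑ i ∈ Finset.Icc s e, (x i - segMean x s (e + 1)) ^ 2 :=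
    sum_sq_mean_le x h _
  have hins : Finset.Icc s (e + 1) = insert (e + 1) (Finset.Icc s e) := by
    ext i
    simp only [Finset.mem_Icc, Finset.mem_insert]
    omega
  have h2 : ∑ i ∈ Finset.Icc s e, (x i - segMean x s (e + 1)) ^ 2 ≤ segCost x s (e + 1) := by
    rw [segCost, hins, Finset.sum_insert (by simp)]
    nlinarith [sq_nonneg (x (e + 1) - segMean x s (e + 1))]
  linarith

lemma segCost_self (x : ℕ → ℝ) (n : ℕ) : segCost x n n = 0 := by
  simp [segCost, segMean]

lemma cpLoss_snoc (x : ℕ → ℝ) {j : ℕ} (τ : Fin j → ℕ) (m n : ℕ) :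
    cpLoss x n (Fin.snoc τ m) = cpLoss x m τ + segCost x (m + 1) n := by
  have hB : ∀ i : Fin (j + 2), bounds n (Fin.snoc τ m) i.castSucc = bounds m τ i := by
    intro i
    simp [bounds, Fin.snoc_castSucc, Fin.cons_snoc_eq_snoc_cons]
  rw [cpLoss, Fin.sum_univ_castSucc]
  congr 1
  · rw [cpLoss]
    apply Finset.sum_congr rfl
    intro i _
    rw [Fin.succ_castSucc, hB i.succ, hB i.castSucc]
  · have h1 : bounds n (Fin.snoc τ m) (Fin.last (j + 1)).succ = n := by
      simp [bounds, Fin.succ_last]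
    have h2 : bounds n (Fin.snoc τ m) (Fin.last (j + 1)).castSucc = m := by
      rw [bounds, Fin.snoc_castSucc,
        show Fin.last (j + 1) = (Fin.last j).succ from (Fin.succ_last j).symm,
        Fin.cons_succ, Fin.snoc_last]
    rw [h1, h2]

lemma validCP_snoc {j m n : ℕ} {τ : Fin j → ℕ} (h : validCP m τ) (h1 : 1 ≤ m) (h2 : m < n) :
    validCP n (Fin.snoc τ m) := by
  constructor
  · intro p q hpq
    rcases Fin.eq_castSucc_or_eq_last q with ⟨q', rfl⟩ | rfl
    · rcases Fin.eq_castSucc_or_eq_last p with ⟨p', rfl⟩ | rfl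
      · simp only [Fin.snoc_castSucc]
        exact h.1 (Fin.castSucc_lt_castSucc_iff.mp hpq)
      · exact absurd hpq (not_lt.mpr (Fin.castSucc_lt_last q').le)
    · rcases Fin.eq_castSucc_or_eq_last p with ⟨p', rfl⟩ | rfl
      · simp only [Fin.snoc_castSucc, Fin.snoc_last]
        exact (h.2 p').2
      · exact absurd hpq (lt_irrefl _)
  · intro i
    rcases Fin.eq_castSucc_or_eq_last i with ⟨i', rfl⟩ | rfl
    · simp only [Fin.snoc_castSucc]
      exact ⟨(h.2 i').1, lt_trans (h.2 i').2 h2⟩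
    · simp only [Fin.snoc_last]
      exact ⟨h1, h2⟩

lemma strictMono_lb {j : ℕ} {τ : Fin (j + 1) → ℕ} (hm : StrictMono τ) (h1 : ∀ i, 1 ≤ τ i) :
    ∀ i : Fin (j + 1), (i : ℕ) + 1 ≤ τ i := by
  intro i
  induction i using Fin.induction with
  | zero => simpa using h1 0
  | succ i ih =>
      have hlt := hm (Fin.castSucc_lt_succ (i := i))
      have h2 : (i : ℕ) + 1 ≤ τ i.castSucc := by simpa using ih
      simp only [Fin.val_succ]
      omega

lemma validCP_finite (n k : ℕ) : {τ : Fin k → ℕ | validCP n τ}.Finite := by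
  apply Set.Finite.subset (Set.Finite.pi (fun _ : Fin k => Set.finite_Iio n))
  intro τ hτ i _
  exact (hτ.2 i).2

lemma lossSet_eq (x : ℕ → ℝ) (k n : ℕ) :
    {r : ℝ | ∃ τ : Fin k → ℕ, validCP n τ ∧ r = cpLoss x n τ}
      = (fun τ : Fin k → ℕ => cpLoss x n τ) '' {τ | validCP n τ} := by
  ext r
  constructor
  · rintro ⟨τ, hτ, rfl⟩
    exact ⟨τ, hτ, rfl⟩
  · rintro ⟨τ, hτ, rfl⟩
    exact ⟨τ, hτ, rfl⟩

lemma optLoss_le (x : ℕ → ℝ) {k n : ℕ} {τ : Fin k → ℕ} (h : validCP n τ) :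
    optLoss x k n ≤ cpLoss x n τ := by
  rw [optLoss, lossSet_eq]
  exact csInf_le ((validCP_finite n k).image _).bddBelow ⟨τ, h, rfl⟩

lemma validCP_exists {k n : ℕ} (h : k + 1 ≤ n) : ∃ τ : Fin k → ℕ, validCP n τ := by
  refine ⟨fun i => (i : ℕ) + 1, ?_, ?_⟩
  · intro p q hpq
    have hlt : (p : ℕ) < (q : ℕ) := hpq
    exact Nat.add_lt_add_right hlt 1
  · intro i
    have := i.isLt
    exact ⟨Nat.le_add_left 1 _, show (i : ℕ) + 1 < n by omega⟩

lemma optLoss_attained (x : ℕ → ℝ) {k n : ℕ} (h : k + 1 ≤ n) :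
    ∃ τ : Fin k → ℕ, validCP n τ ∧ optLoss x k n = cpLoss x n τ := by
  obtain ⟨τ₀, hτ₀⟩ := validCP_exists h
  have hmem := Set.Nonempty.csInf_mem
    (s := (fun τ : Fin k → ℕ => cpLoss x n τ) '' {τ | validCP n τ})
    ⟨_, τ₀, hτ₀, rfl⟩ ((validCP_finite n k).image _)
  rw [optLoss, lossSet_eq]
  obtain ⟨τ, hτ, hval⟩ := hmem
  exact ⟨τ, hτ, hval.symm⟩

lemma optLoss_succ_le (x : ℕ → ℝ) {j n : ℕ} (hn : j + 2 ≤ n) :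
    optLoss x (j + 1) n ≤ optLoss x j (n - 1) := by
  obtain ⟨τ, hτ, heq⟩ := optLoss_attained x (k := j) (n := n - 1) (by omega)
  have hv : validCP n (Fin.snoc τ (n - 1)) := validCP_snoc hτ (by omega) (by omega)
  have hle := optLoss_le x hv
  rw [cpLoss_snoc, show n - 1 + 1 = n from by omega, segCost_self] at hle
  linarith

lemma Topt_subset_Tcand (a b : ℕ → ℝ) (j n : ℕ) (hn : j + 2 ≤ n) :
    Topt a b (j + 1) n ⊆ Tcand a b j n := by
  rintro τ ⟨hv, z, hopt⟩
  set x := paramSeq a b z with hx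
  set m := τ (Fin.last j) with hm
  set σ := Fin.init τ with hσdef
  have hτσ : τ = Fin.snoc σ m := (Fin.snoc_init_self τ).symm
  have hmlb : j + 1 ≤ m := by
    have := strictMono_lb hv.1 (fun i => (hv.2 i).1) (Fin.last j)
    simpa [Fin.val_last] using this
  have hmub : m < n := (hv.2 _).2
  have hσv : validCP m σ := by
    constructor
    · intro p q hpq
      exact hv.1 (Fin.castSucc_lt_castSucc_iff.mpr hpq)
    · intro i
      exact ⟨(hv.2 _).1, hv.1 (Fin.castSucc_lt_last i)⟩
  have hle : optLoss x j m ≤ cpLoss x m σ := optLoss_le x hσv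
  have h2 : cpLoss x n τ = cpLoss x m σ + segCost x (m + 1) n := by
    rw [hτσ, cpLoss_snoc]
  have hge : cpLoss x m σ ≤ optLoss x j m := by
    by_contra hlt
    push_neg at hlt
    obtain ⟨τ', hτ', heq'⟩ := optLoss_attained x (k := j) (n := m) (by omega)
    have hv' : validCP n (Fin.snoc τ' m) := validCP_snoc hτ' (by omega) hmub
    have h1 := optLoss_le x hv'
    rw [cpLoss_snoc] at h1
    rw [hopt, h2] at h1
    linarith
  have hσopt : σ ∈ Topt a b j m := ⟨hσv, z, le_antisymm hle hge⟩
  exact Set.mem_biUnion (show m ∈ Set.Icc (j + 1) (n - 1) from ⟨hmlb, by omega⟩)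
    ⟨σ, hσopt, hτσ.symm⟩

/-- Lemma 4 (additional pruning for parametric DP): with
`P_prune = { τ ∈ T̂_{k,n-1} : L_{k,n-1}(z,τ) > L^opt_{k-1,n-1}(z) for all z }` and
`T̄_{k,n} = (T̂_{k,n-1} \ P_prune) ∪ concat(T^opt_{k-1,n-1}, n-1)`,
we have `T^opt_{k,n} ⊆ T̄_{k,n} ⊆ T̂_{k,n}` (here `k = j + 1`). -/
theorem paraDP_additional_prune (a b : ℕ → ℝ) (j n : ℕ) (hn : j + 2 ≤ n) :
    Topt a b (j + 1) n ⊆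
        (Tcand a b j (n - 1) \
            {τ : Fin (j + 1) → ℕ | τ ∈ Tcand a b j (n - 1) ∧
              ∀ z : ℝ,
                optLoss (paramSeq a b z) j (n - 1) <
                  cpLoss (paramSeq a b z) (n - 1) τ}) ∪
          ((fun τ : Fin j → ℕ => Fin.snoc τ (n - 1)) '' Topt a b j (n - 1)) ∧
      ((Tcand a b j (n - 1) \
            {τ : Fin (j + 1) → ℕ | τ ∈ Tcand a b j (n - 1) ∧
              ∀ z : ℝ,
                optLoss (paramSeq a b z) j (n - 1) <
                  cpLoss (paramSeq a b z) (n - 1) τ}) ∪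
          ((fun τ : Fin j → ℕ => Fin.snoc τ (n - 1)) '' Topt a b j (n - 1))) ⊆
        Tcand a b j n := by
  constructor
  · intro τ hτ
    obtain ⟨hv, z, hopt⟩ := hτ
    have hτc := Topt_subset_Tcand a b j n hn ⟨hv, z, hopt⟩
    simp only [Tcand, Set.mem_iUnion, Set.mem_Icc, Set.mem_image, exists_prop] at hτc
    obtain ⟨m, ⟨hm1, hm2⟩, σ, hσ, hsnoc⟩ := hτc
    by_cases hm : m = n - 1
    · right
      exact ⟨σ, hm ▸ hσ, hm ▸ hsnoc⟩
    · left
      have hm2' : m ≤ n - 2 := by omega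
      have hmem : τ ∈ Tcand a b j (n - 1) := by
        apply Set.mem_biUnion (show m ∈ Set.Icc (j + 1) (n - 1 - 1) from ⟨hm1, by omega⟩)
        exact ⟨σ, hσ, hsnoc⟩
      refine ⟨hmem, ?_⟩
      intro hpr
      obtain ⟨-, hall⟩ := hpr
      set x := paramSeq a b z with hx
      have h1 : cpLoss x (n - 1) τ ≤ cpLoss x n τ := by
        rw [← hsnoc, cpLoss_snoc, cpLoss_snoc]
        have hs : segCost x (m + 1) (n - 1) ≤ segCost x (m + 1) (n - 1 + 1) :=
          segCost_le_succ x (by omega)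
        rw [show n - 1 + 1 = n from by omega] at hs
        linarith
      have h2 := hall z
      have h3 := optLoss_succ_le x hn
      rw [hopt] at h3
      linarith
  · rintro τ (⟨hmem, -⟩ | ⟨σ, hσ, hsnoc⟩)
    · simp only [Tcand, Set.mem_iUnion, Set.mem_Icc, Set.mem_image, exists_prop] at hmem ⊢
      obtain ⟨m, ⟨h1, h2⟩, hτ⟩ := hmem
      exact ⟨m, ⟨h1, by omega⟩, hτ⟩
    · exact Set.mem_biUnion (show n - 1 ∈ Set.Icc (j + 1) (n - 1) from ⟨by omega, le_refl _⟩)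
        ⟨σ, hσ, hsnoc⟩
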